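/- Let X be a real Hausdorff locally convex topological vector space, K a convex compact metrizable subset of X, and f : K → ℝ ∪ {+∞} a proper lower semicontinuous function. Let Aff(K) denote the Banach space of all continuous affine real-valued functions on K equipped with the sup norm. Then the set N(f) = {φ ∈ Aff(K) : f − φ does not attain a strict minimum on K} is meagre (of the first Baire category) in (Aff(K), ‖·‖_∞). -/

import Mathlib

open Set Metric MeasureTheory RealInnerProductSpace

noncomputable section

namespace Stmt7

lemma core {ι : Type*} [Fintype ι] {M : Type*} [Nonempty M] (h : M → ℝ) {b : ℝ}
    (hbdd : ∀ x, b ≤ h x)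
    (e : M → EuclideanSpace ℝ ι) {B : ℝ} (hB : ∀ x, ‖e x‖ ≤ B)
    {ε η : ℝ} (hε : 0 < ε) (hη : 0 < η) :
    ∃ c : EuclideanSpace ℝ ι, ‖c‖ < ε ∧ ∃ δ : ℝ, 0 < δ ∧
      ∀ x y : M, h x - ⟪c, e x⟫ < (⨅ z : M, (h z - ⟪c, e z⟫)) + δ →
        h y - ⟪c, e y⟫ < (⨅ z : M, (h z - ⟪c, e z⟫)) + δ →
        ‖e x - e y‖ ≤ η := by
  have hB0 : 0 ≤ B := le_trans (norm_nonneg _) (hB (Classical.arbitrary M))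
  set Φ : EuclideanSpace ℝ ι → ℝ := fun c => ⨅ z : M, (h z - ⟪c, e z⟫) with hΦ
  have hlow : ∀ c : EuclideanSpace ℝ ι, ∀ z : M, b - ‖c‖ * B ≤ h z - ⟪c, e z⟫ := by
    intro c z
    have h1 : ⟪c, e z⟫ ≤ ‖c‖ * B := by
      calc ⟪c, e z⟫ ≤ ‖c‖ * ‖e z‖ := real_inner_le_norm _ _
        _ ≤ ‖c‖ * B := by
          exact mul_le_mul_of_nonneg_left (hB z) (norm_nonneg c)
    linarith [hbdd z]
  have hbddbelow : ∀ c : EuclideanSpace ℝ ι,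
      BddBelow (Set.range fun z : M => h z - ⟪c, e z⟫) :=
    fun c => ⟨b - ‖c‖ * B, by rintro y ⟨z, rfl⟩; exact hlow c z⟩
  have hΦle : ∀ (c : EuclideanSpace ℝ ι) (z : M), Φ c ≤ h z - ⟪c, e z⟫ :=
    fun c z => ciInf_le (hbddbelow c) z
  -- Lipschitz
  have hdiff_le : ∀ c c' : EuclideanSpace ℝ ι, Φ c - Φ c' ≤ B * ‖c - c'‖ := by
    intro c c'
    have : ∀ z : M, Φ c - B * ‖c - c'‖ ≤ h z - ⟪c', e z⟫ := by
      intro z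
      have h1 : ⟪c - c', e z⟫ ≤ B * ‖c - c'‖ := by
        calc ⟪c - c', e z⟫ ≤ ‖c - c'‖ * ‖e z‖ := real_inner_le_norm _ _
          _ ≤ ‖c - c'‖ * B := mul_le_mul_of_nonneg_left (hB z) (norm_nonneg _)
          _ = B * ‖c - c'‖ := mul_comm _ _
      have h2 : Φ c ≤ h z - ⟪c, e z⟫ := hΦle c z
      have h1' : ⟪c' - c, e z⟫ ≤ B * ‖c - c'‖ := by
        calc ⟪c' - c, e z⟫ ≤ ‖c' - c‖ * ‖e z‖ := real_inner_le_norm _ _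
          _ ≤ ‖c' - c‖ * B := mul_le_mul_of_nonneg_left (hB z) (norm_nonneg _)
          _ = B * ‖c - c'‖ := by rw [norm_sub_rev]; exact mul_comm _ _
      have h3 : ⟪c' - c, e z⟫ = ⟪c', e z⟫ - ⟪c, e z⟫ := inner_sub_left _ _ _
      linarith
    have := le_ciInf this
    simpa [Φ] using sub_le_iff_le_add'.mp (by simpa [sub_le_iff_le_add] using this)
  have hlip : LipschitzWith (Real.toNNReal B) Φ := by
    apply LipschitzWith.of_dist_le_mul
    intro c c'
    rw [Real.dist_eq, abs_sub_le_iff, Real.coe_toNNReal _ hB0, dist_eq_norm]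
    constructor
    · exact hdiff_le c c'
    · rw [← norm_neg, neg_sub]; exact hdiff_le c' c
  -- a differentiability point near 0
  obtain ⟨c₀, hc₀ε, hc₀diff⟩ : ∃ c₀ : EuclideanSpace ℝ ι, ‖c₀‖ < ε ∧
      DifferentiableAt ℝ Φ c₀ := by
    by_contra hcon
    push_neg at hcon
    have hsub : ball (0 : EuclideanSpace ℝ ι) ε ⊆ {c | ¬ DifferentiableAt ℝ Φ c} := by
      intro c hc
      exact hcon c (mem_ball_zero_iff.mp hc)
    have hnull : volume {c : EuclideanSpace ℝ ι | ¬ DifferentiableAt ℝ Φ c} = 0 := by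
      have := hlip.ae_differentiableAt (μ := volume)
      rwa [MeasureTheory.ae_iff] at this
    have := measure_ball_pos volume (0 : EuclideanSpace ℝ ι) hε
    exact this.ne' (le_antisymm (le_trans (measure_mono hsub) hnull.le) zero_le)
  -- derivative data
  have hL : HasFDerivAt Φ (fderiv ℝ Φ c₀) c₀ := hc₀diff.hasFDerivAt
  set L := fderiv ℝ Φ c₀ with hLdef
  set v : EuclideanSpace ℝ ι := (InnerProductSpace.toDual ℝ (EuclideanSpace ℝ ι)).symm L with hv
  have hvL : ∀ w : EuclideanSpace ℝ ι, ⟪v, w⟫ = L w := fun w =>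
    InnerProductSpace.toDual_symm_apply
  have hlittle : ∀ᶠ h' in nhds (0 : EuclideanSpace ℝ ι),
      ‖Φ (c₀ + h') - Φ c₀ - L h'‖ ≤ (η/8) * ‖h'‖ := by
    have := hasFDerivAt_iff_isLittleO_nhds_zero.1 hL
    exact Asymptotics.isLittleO_iff.mp this (by positivity)
  obtain ⟨r, hr0, hr⟩ : ∃ r > 0, ∀ h' : EuclideanSpace ℝ ι, dist h' 0 < r →
      ‖Φ (c₀ + h') - Φ c₀ - L h'‖ ≤ (η/8) * ‖h'‖ := by
    rw [Metric.eventually_nhds_iff] at hlittle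
    obtain ⟨r, hr0, hr⟩ := hlittle
    exact ⟨r, hr0, fun h' hh' => hr hh'⟩
  set r' : ℝ := r/2 with hr'def
  have hr'0 : 0 < r' := by positivity
  set δ : ℝ := r' * (η/8) with hδdef
  have hδ0 : 0 < δ := by positivity
  refine ⟨c₀, hc₀ε, δ, hδ0, ?_⟩
  have key : ∀ x : M, h x - ⟪c₀, e x⟫ < Φ c₀ + δ → ‖e x + v‖ ≤ η/4 := by
    intro x hx
    set w : EuclideanSpace ℝ ι := v + e x with hwdef
    have hineq : ∀ h' : EuclideanSpace ℝ ι, ‖h'‖ ≤ r' → ⟪h', w⟫ < δ + (η/8) * ‖h'‖ := by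
      intro h' hh'
      have h1 : Φ (c₀ + h') ≤ (h x - ⟪c₀, e x⟫) - ⟪h', e x⟫ := by
        have := hΦle (c₀ + h') x
        have hadd : ⟪c₀ + h', e x⟫ = ⟪c₀, e x⟫ + ⟪h', e x⟫ := inner_add_left _ _ _
        linarith
      have h2 : ‖Φ (c₀ + h') - Φ c₀ - L h'‖ ≤ (η/8) * ‖h'‖ := by
        apply hr
        rw [dist_zero_right]
        exact lt_of_le_of_lt hh' (by linarith)
      rw [Real.norm_eq_abs, abs_le] at h2
      have h3 : ⟪h', w⟫ = ⟪h', v⟫ + ⟪h', e x⟫ := inner_add_right _ _ _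
      have h4 : ⟪h', v⟫ = L h' := by rw [real_inner_comm]; exact hvL h'
      linarith [h2.1, h1]
    by_cases hw : w = 0
    · have : e x + v = w := by rw [hwdef]; abel
      rw [this, hw, norm_zero]
      positivity
    · have hwn : 0 < ‖w‖ := norm_pos_iff.mpr hw
      have hh'n : ‖(r'/‖w‖) • w‖ = r' := by
        rw [norm_smul, Real.norm_eq_abs, abs_of_pos (by positivity)]
        field_simp
      have := hineq ((r'/‖w‖) • w) (le_of_eq hh'n)
      rw [real_inner_smul_left, real_inner_self_eq_norm_mul_norm] at this
      have hww : r' / ‖w‖ * (‖w‖ * ‖w‖) = r' * ‖w‖ := by field_simp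
      rw [hww, hh'n] at this
      have hlt : r' * ‖w‖ < r' * (η/4) := by rw [hδdef] at this; linarith
      have : ‖w‖ < η/4 := (mul_lt_mul_iff_right₀ hr'0).mp hlt
      have hew : e x + v = w := by rw [hwdef]; abel
      rw [hew]
      linarith
  intro x y hx hy
  have h1 := key x hx
  have h2 := key y hy
  calc ‖e x - e y‖ = ‖(e x + v) - (e y + v)‖ := by rw [add_sub_add_right_eq_sub]
    _ ≤ ‖e x + v‖ + ‖e y + v‖ := norm_sub_le _ _
    _ ≤ η/4 + η/4 := add_le_add h1 h2
    _ ≤ η := by linarith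
lemma sep {X : Type*} [AddCommGroup X] [Module ℝ X] [TopologicalSpace X]
    [IsTopologicalAddGroup X] [ContinuousSMul ℝ X] [LocallyConvexSpace ℝ X] [T2Space X]
    {K : Set X} [CompactSpace K] {Z : Set (K × K)} (hZc : IsClosed Z)
    (hZd : ∀ p : K × K, p ∈ Z → p.1 ≠ p.2) :
    ∃ (n : ℕ) (ℓ : Fin n → (X →L[ℝ] ℝ)) (η : ℝ), 0 < η ∧
      ∀ p : K × K, p ∈ Z →
        η < ‖(EuclideanSpace.equiv (Fin n) ℝ).symm (fun i => ℓ i p.1) -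
          (EuclideanSpace.equiv (Fin n) ℝ).symm (fun i => ℓ i p.2)‖ := by
  rcases Z.eq_empty_or_nonempty with hZe | hZne
  · refine ⟨0, fun _ => 0, 1, one_pos, fun p hp => ?_⟩
    rw [hZe] at hp
    exact absurd hp (Set.notMem_empty p)
  have hZcomp : IsCompact Z := hZc.isCompact
  have hsep : ∀ q : Z, ∃ f : X →L[ℝ] ℝ, f q.1.1 ≠ f q.1.2 := by
    intro q
    have hne : (q.1.1 : X) ≠ (q.1.2 : X) := fun hh =>
      hZd q.1 q.2 (Subtype.ext hh)
    exact SeparatingDual.exists_separating_of_ne hne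
  choose F hF using hsep
  set U : Z → Set (K × K) := fun q => {p | F q p.1 ≠ F q p.2} with hU
  have hUopen : ∀ q, IsOpen (U q) := by
    intro q
    have hcont : Continuous fun p : K × K => F q p.1 - F q p.2 := by
      apply Continuous.sub
      · exact (F q).continuous.comp (continuous_subtype_val.comp continuous_fst)
      · exact (F q).continuous.comp (continuous_subtype_val.comp continuous_snd)
    have : U q = (fun p : K × K => F q p.1 - F q p.2) ⁻¹' ({0}ᶜ) := by
      ext p; simp [hU, sub_eq_zero]
    rw [this]
    exact hcont.isOpen_preimage _ (isOpen_compl_singleton)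
  have hcover : Z ⊆ ⋃ q : Z, U q := by
    intro p hp
    exact Set.mem_iUnion.mpr ⟨⟨p, hp⟩, hF ⟨p, hp⟩⟩
  obtain ⟨t, ht⟩ := hZcomp.elim_finite_subcover U hUopen hcover
  set n := t.card with hn
  set eqv := t.equivFin with heqv
  set ℓ : Fin n → (X →L[ℝ] ℝ) := fun i => F ((eqv.symm i : t) : Z) with hℓ
  set e : K → EuclideanSpace ℝ (Fin n) :=
    fun x => (EuclideanSpace.equiv (Fin n) ℝ).symm (fun i => ℓ i x) with he
  have hecont : Continuous e := by
    apply (EuclideanSpace.equiv (Fin n) ℝ).symm.continuous.comp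
    exact continuous_pi fun i => (ℓ i).continuous.comp continuous_subtype_val
  set G : K × K → ℝ := fun p => ‖e p.1 - e p.2‖ with hG
  have hGcont : Continuous G := by
    apply Continuous.norm
    exact ((hecont.comp continuous_fst).sub (hecont.comp continuous_snd))
  have hGpos : ∀ p ∈ Z, 0 < G p := by
    intro p hp
    obtain ⟨q, hq, hpq⟩ := Set.mem_iUnion₂.mp (ht hp)
    have hne : e p.1 ≠ e p.2 := by
      intro hcontra
      apply hpq
      have : ∀ i, ℓ i p.1 = ℓ i p.2 := by
        intro i
        have := congrArg (fun v => (EuclideanSpace.equiv (Fin n) ℝ) v) hcontra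
        simpa [he] using congrFun this i
      have := this (eqv ⟨q, hq⟩)
      simpa [hℓ, heqv] using this
    simp only [hG, norm_pos_iff, sub_ne_zero]
    exact hne
  obtain ⟨p₀, hp₀Z, hp₀min⟩ := hZcomp.exists_isMinOn hZne hGcont.continuousOn
  refine ⟨n, ℓ, G p₀ / 2, by linarith [hGpos p₀ hp₀Z], ?_⟩
  intro p hp
  have := hp₀min hp
  have h2 := hGpos p₀ hp₀Z
  calc G p₀ / 2 < G p₀ := by linarith
    _ ≤ G p := this

lemma bddBelowAux {M : Type*} [TopologicalSpace M] [CompactSpace M]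
    (F : M → ℝ) {b : ℝ} (hb : ∀ x, b ≤ F x) (ψ : C(M, ℝ)) :
    BddBelow (Set.range fun z : M => F z - ψ z) := by
  refine ⟨b - ‖ψ‖, ?_⟩
  rintro y ⟨z, rfl⟩
  have h1 : ‖ψ z‖ ≤ ‖ψ‖ := ψ.norm_coe_le_norm z
  rw [Real.norm_eq_abs, abs_le] at h1
  have := hb z
  simp only []
  linarith [h1.2]

lemma infLip {M : Type*} [MetricSpace M] [CompactSpace M] [Nonempty M]
    (F : M → ℝ) {b : ℝ} (hb : ∀ x, b ≤ F x) (ψ ψ' : C(M, ℝ)) :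
    (⨅ z : M, (F z - ψ z)) ≤ (⨅ z : M, (F z - ψ' z)) + dist ψ ψ' := by
  rw [← sub_le_iff_le_add]
  apply le_ciInf
  intro z
  have h1 : (⨅ z : M, (F z - ψ z)) ≤ F z - ψ z := ciInf_le (bddBelowAux F hb ψ) z
  have h2 : dist (ψ z) (ψ' z) ≤ dist ψ ψ' := ContinuousMap.dist_apply_le_dist z
  rw [Real.dist_eq, abs_le] at h2
  linarith [h2.1]

lemma closedE {M : Type*} [MetricSpace M] [CompactSpace M] [Nonempty M]
    (F : M → ℝ) {b : ℝ} (hb : ∀ x, b ≤ F x) (r s : ℝ) :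
    IsClosed {ψ : C(M, ℝ) | ‖ψ‖ ≤ r ∧ ∀ δ : ℝ, 0 < δ → ∃ x y : M, s ≤ dist x y ∧
      F x - ψ x < (⨅ z : M, (F z - ψ z)) + δ ∧
      F y - ψ y < (⨅ z : M, (F z - ψ z)) + δ} := by
  rw [← isOpen_compl_iff, Metric.isOpen_iff]
  intro ψ₀ hψ₀
  rcases lt_or_ge r ‖ψ₀‖ with hr | hr
  · refine ⟨‖ψ₀‖ - r, by linarith, ?_⟩
    intro ψ hψ
    simp only [Set.mem_compl_iff, Set.mem_setOf_eq, not_and]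
    intro hψn
    exfalso
    have h1 : |‖ψ‖ - ‖ψ₀‖| ≤ ‖ψ - ψ₀‖ := abs_norm_sub_norm_le _ _
    rw [abs_le] at h1
    rw [mem_ball, dist_eq_norm] at hψ
    linarith [h1.1]
  · simp only [Set.mem_compl_iff, Set.mem_setOf_eq, not_and, not_forall] at hψ₀
    obtain ⟨δ₀, hδ₀pos, hδ₀⟩ := hψ₀ hr
    push_neg at hδ₀
    refine ⟨δ₀/8, by linarith, ?_⟩
    intro ψ hψ
    rw [mem_ball] at hψ
    simp only [Set.mem_compl_iff, Set.mem_setOf_eq, not_and]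
    intro _
    intro hP
    obtain ⟨x, y, hsep, hx, hy⟩ := hP (δ₀/2) (by linarith)
    have key : ∀ w : M, F w - ψ w < (⨅ z : M, (F z - ψ z)) + δ₀/2 →
        F w - ψ₀ w < (⨅ z : M, (F z - ψ₀ z)) + δ₀ := by
      intro w hw
      have h1 : dist (ψ w) (ψ₀ w) ≤ dist ψ ψ₀ := ContinuousMap.dist_apply_le_dist w
      rw [Real.dist_eq, abs_le] at h1
      have h2 := infLip F hb ψ ψ₀
      linarith [h1.2]
    exact absurd (key y hy) (not_lt.mpr (hδ₀ x y hsep (key x hx)))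

lemma lscBddBelow {M : Type*} [TopologicalSpace M] [CompactSpace M] (f : M → EReal)
    (hreal : ∀ x, f x ≠ ⊥) (hlsc : LowerSemicontinuous f) :
    ∃ b : ℝ, ∀ x, (b : EReal) ≤ f x := by
  rcases isEmpty_or_nonempty M with hM | hM
  · exact ⟨0, fun x => absurd (hM.false x) (by simp)⟩
  set U : ℕ → Set M := fun k => {x | (-(k : ℝ) : EReal) < f x} with hU
  have hUopen : ∀ k, IsOpen (U k) := fun k => hlsc.isOpen_preimage _
  have hcover : univ ⊆ ⋃ k, U k := by
    intro x _
    have hbot : (⊥ : EReal) < f x := Ne.bot_lt' (Ne.symm (hreal x))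
    obtain ⟨r, -, hr2⟩ := EReal.lt_iff_exists_real_btwn.mp hbot
    refine mem_iUnion.mpr ⟨⌈-r⌉₊, ?_⟩
    have h1 : -r ≤ (⌈-r⌉₊ : ℝ) := Nat.le_ceil _
    have h2 : -((⌈-r⌉₊ : ℕ) : ℝ) ≤ r := by linarith
    exact lt_of_le_of_lt (EReal.coe_le_coe_iff.mpr h2) hr2
  obtain ⟨t, ht⟩ := isCompact_univ.elim_finite_subcover U hUopen hcover
  have htne : t.Nonempty := by
    obtain ⟨x⟩ := hM
    obtain ⟨k, hk, -⟩ := mem_iUnion₂.mp (ht (mem_univ x))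
    exact ⟨k, hk⟩
  refine ⟨-(t.max' htne : ℕ), fun x => ?_⟩
  obtain ⟨k, hk, hxk⟩ := mem_iUnion₂.mp (ht (mem_univ x))
  have h1 : (k : ℝ) ≤ ((t.max' htne : ℕ) : ℝ) := Nat.cast_le.mpr (t.le_max' k hk)
  exact le_trans (EReal.coe_le_coe_iff.mpr (by linarith)) hxk.le

lemma strictMin {M : Type*} [MetricSpace M] [CompactSpace M] [Nonempty M]
    (g : M → ℝ) (hlsc : LowerSemicontinuous g) (hbdd : BddBelow (Set.range g))
    (hδ : ∀ n : ℕ, ∃ δ : ℝ, 0 < δ ∧ ∀ x y : M, 1/((n:ℝ)+1) ≤ dist x y →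
      ¬(g x < (⨅ z : M, g z) + δ ∧ g y < (⨅ z : M, g z) + δ)) :
    ∃ x₀ : M, g x₀ = (⨅ z : M, g z) ∧ ∀ x : M, x ≠ x₀ → g x₀ < g x := by
  set m := ⨅ z : M, g z with hm
  set S : {δ : ℝ // 0 < δ} → Set M := fun δ => closure {x | g x < m + δ.1} with hS
  have hSsub : ∀ δ δ' : {δ : ℝ // 0 < δ}, δ.1 ≤ δ'.1 → S δ ⊆ S δ' := by
    intro δ δ' hle
    apply closure_mono
    intro x hx
    simp only [Set.mem_setOf_eq] at hx ⊢
    linarith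
  have hdir : Directed (· ⊇ ·) S := by
    intro δ δ'
    refine ⟨⟨min δ.1 δ'.1, lt_min δ.2 δ'.2⟩, ?_, ?_⟩
    · exact hSsub _ _ (min_le_left _ _)
    · exact hSsub _ _ (min_le_right _ _)
  have hne : ∀ δ : {δ : ℝ // 0 < δ}, (S δ).Nonempty := by
    intro δ
    have : m < m + δ.1 := by linarith [δ.2]
    obtain ⟨x, hx⟩ := exists_lt_of_ciInf_lt this
    exact ⟨x, subset_closure hx⟩
  obtain ⟨x₀, hx₀⟩ := IsCompact.nonempty_iInter_of_directed_nonempty_isCompact_isClosed S hdir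
    hne (fun δ => isClosed_closure.isCompact) (fun δ => isClosed_closure)
  have hx₀le : ∀ δ : ℝ, 0 < δ → g x₀ ≤ m + δ := by
    intro δ hδpos
    have h1 : x₀ ∈ S ⟨δ, hδpos⟩ := mem_iInter.mp hx₀ _
    have h2 : S ⟨δ, hδpos⟩ ⊆ {x | g x ≤ m + δ} := by
      apply closure_minimal
      · intro x hx
        simp only [Set.mem_setOf_eq] at hx ⊢
        linarith
      · exact hlsc.isClosed_preimage (m + δ)
    exact h2 h1
  have hx₀m : g x₀ = m := by
    refine le_antisymm ?_ (ciInf_le hbdd x₀)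
    apply le_of_forall_sub_le
    intro ε hε
    linarith [hx₀le ε hε]
  refine ⟨x₀, hx₀m, ?_⟩
  intro x hx
  by_contra hle
  push_neg at hle
  have hxm : g x ≤ m := hx₀m ▸ hle
  have hd : 0 < dist x x₀ := dist_pos.mpr hx
  obtain ⟨n, hn⟩ := exists_nat_one_div_lt hd
  obtain ⟨δn, hδnpos, hδn⟩ := hδ n
  exact hδn x x₀ hn.le ⟨lt_of_le_of_lt hxm (by linarith), by rw [hx₀m]; linarith⟩

end Stmt7

open Stmt7 in
/-- **Variational principle with continuous affine perturbations.** Let `X` be a real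
Hausdorff locally convex space, `K ⊆ X` a convex compact metrizable subset, and
`f : K → ℝ ∪ {+∞}` proper and lower semicontinuous. Then the set of continuous affine
functions `φ : K → ℝ` such that `f - φ` does not attain a strict minimum on `K` is meagre
in `Aff(K)` (with the topology of uniform convergence, i.e. the compact-open topology,
which coincides with the sup-norm topology since `K` is compact). -/
theorem stmt_7 {X : Type*} [AddCommGroup X] [Module ℝ X] [TopologicalSpace X]
    [IsTopologicalAddGroup X] [ContinuousSMul ℝ X] [LocallyConvexSpace ℝ X] [T2Space X]
    (K : Set X) (hKconv : Convex ℝ K) (hKcomp : IsCompact K)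
    (hmetr : TopologicalSpace.MetrizableSpace K)
    (f : K → EReal) (hproper : ∃ p, f p ≠ ⊤) (hreal : ∀ p, f p ≠ ⊥)
    (hlsc : LowerSemicontinuous f) :
    IsMeagre {φ : {ψ : C(K, ℝ) // ∀ (a b : X) (ha : a ∈ K) (hb : b ∈ K) (l : ℝ),
        0 ≤ l → l ≤ 1 → ∀ hm : l • a + (1 - l) • b ∈ K,
          ψ ⟨l • a + (1 - l) • b, hm⟩ = l * ψ ⟨a, ha⟩ + (1 - l) * ψ ⟨b, hb⟩} |
      ¬ ∃ p₀ : K, ∀ p : K, p ≠ p₀ →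
        f p₀ - (φ.1 p₀ : ℝ) < f p - (φ.1 p : ℝ)} := by
  classical
  haveI := hmetr
  haveI : CompactSpace K := isCompact_iff_compactSpace.mp hKcomp
  letI : MetricSpace K := TopologicalSpace.metrizableSpaceMetric K
  obtain ⟨q₀, hq₀⟩ := hproper
  haveI : Nonempty K := ⟨q₀⟩
  set c₀ : ℝ := (f q₀).toReal with hc₀
  have hfq₀ : f q₀ = (c₀ : EReal) := (EReal.coe_toReal hq₀ (hreal q₀)).symm
  obtain ⟨b₀, hb₀⟩ := lscBddBelow f hreal hlsc
  set b : ℝ := min b₀ c₀ with hbdef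
  have hb : ∀ x, (b : EReal) ≤ f x := fun x =>
    le_trans (EReal.coe_le_coe_iff.mpr (min_le_left _ _)) (hb₀ x)
  have hbc₀ : b ≤ c₀ := min_le_right _ _
  set C : ℕ → ℝ := fun r => c₀ + 2*r + 2 with hCdef
  have hc₀C : ∀ r : ℕ, c₀ ≤ C r := by
    intro r
    have : (0:ℝ) ≤ (r:ℝ) := Nat.cast_nonneg r
    simp only [hCdef]; linarith
  set Fr : ℕ → K → ℝ := fun r x => (f x ⊓ ((C r : ℝ) : EReal)).toReal with hFrdef
  have hble : ∀ (r : ℕ) (x : K), (b : EReal) ≤ f x ⊓ ((C r : ℝ) : EReal) :=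
    fun r x => le_inf (hb x) (EReal.coe_le_coe_iff.mpr (le_trans hbc₀ (hc₀C r)))
  have hinf_ne_bot : ∀ (r : ℕ) (x : K), f x ⊓ ((C r : ℝ) : EReal) ≠ ⊥ :=
    fun r x => ((EReal.bot_lt_coe b).trans_le (hble r x)).ne'
  have hinf_ne_top : ∀ (r : ℕ) (x : K), f x ⊓ ((C r : ℝ) : EReal) ≠ ⊤ :=
    fun r x => (lt_of_le_of_lt inf_le_right (EReal.coe_lt_top _)).ne
  have hFr_lb : ∀ (r : ℕ) (x : K), b ≤ Fr r x := by
    intro r x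
    have := EReal.toReal_le_toReal (hble r x) (EReal.coe_ne_bot b) (hinf_ne_top r x)
    rwa [EReal.toReal_coe] at this
  have hFr_ub : ∀ (r : ℕ) (x : K), Fr r x ≤ C r := by
    intro r x
    have := EReal.toReal_le_toReal (inf_le_right :
      f x ⊓ ((C r : ℝ) : EReal) ≤ ((C r : ℝ) : EReal)) (hinf_ne_bot r x) (EReal.coe_ne_top _)
    rwa [EReal.toReal_coe] at this
  have hFr_le_f : ∀ (r : ℕ) (x : K), ((Fr r x : ℝ) : EReal) ≤ f x := by
    intro r x
    rcases lt_or_ge (f x) (((C r : ℝ)) : EReal) with hlt | hge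
    · have h1 : f x ⊓ ((C r : ℝ) : EReal) = f x := inf_eq_left.mpr hlt.le
      simp only [hFrdef, h1]
      rw [EReal.coe_toReal (hlt.trans (EReal.coe_lt_top _)).ne (hreal x)]
    · have h1 : f x ⊓ ((C r : ℝ) : EReal) = ((C r : ℝ) : EReal) := inf_eq_right.mpr hge
      simp only [hFrdef, h1, EReal.toReal_coe]
      exact hge
  have hFr_lsc : ∀ r : ℕ, LowerSemicontinuous (Fr r) := by
    intro r x t ht
    simp only [hFrdef] at ht
    have h1 : (t : EReal) < f x ⊓ ((C r : ℝ) : EReal) := by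
      rw [← EReal.coe_toReal (hinf_ne_top r x) (hinf_ne_bot r x)]
      exact EReal.coe_lt_coe_iff.mpr ht
    rw [lt_inf_iff] at h1
    filter_upwards [hlsc x t h1.1] with y hy
    have h2 : (t : EReal) < f y ⊓ ((C r : ℝ) : EReal) := lt_inf_iff.mpr ⟨hy, h1.2⟩
    have h3 := EReal.toReal_le_toReal h2.le (EReal.coe_ne_bot t) (hinf_ne_top r y)
    rw [EReal.toReal_coe] at h3
    rcases eq_or_lt_of_le h3 with heq | hlt
    · exfalso
      have := congrArg (fun z : ℝ => (z : EReal)) heq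
      simp only [EReal.coe_toReal (hinf_ne_top r y) (hinf_ne_bot r y)] at this
      exact absurd (this ▸ h2) (lt_irrefl _)
    · exact hlt
  have hFrq₀ : ∀ r : ℕ, Fr r q₀ = c₀ := by
    intro r
    have h1 : f q₀ ⊓ ((C r : ℝ) : EReal) = f q₀ := by
      rw [hfq₀]
      exact inf_eq_left.mpr (EReal.coe_le_coe_iff.mpr (hc₀C r))
    rw [hFrdef]
    simp only []
    rw [h1, hfq₀, EReal.toReal_coe]
  set A := {ψ : C(K, ℝ) // ∀ (a b : X) (ha : a ∈ K) (hb : b ∈ K) (l : ℝ),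
        0 ≤ l → l ≤ 1 → ∀ hm : l • a + (1 - l) • b ∈ K,
          ψ ⟨l • a + (1 - l) • b, hm⟩ = l * ψ ⟨a, ha⟩ + (1 - l) * ψ ⟨b, hb⟩} with hA
  set Cset : ℕ → ℕ → Set C(K,ℝ) := fun n r =>
    {ψ : C(K, ℝ) | ‖ψ‖ ≤ (r:ℝ) ∧ ∀ δ : ℝ, 0 < δ → ∃ x y : K, 1/((n:ℝ)+1) ≤ dist x y ∧
      Fr r x - ψ x < (⨅ z : K, (Fr r z - ψ z)) + δ ∧
      Fr r y - ψ y < (⨅ z : K, (Fr r z - ψ z)) + δ} with hCset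
  set Eset : ℕ → ℕ → Set A := fun n r => Subtype.val ⁻¹' (Cset n r) with hEset
  have hEclosed : ∀ n r, IsClosed (Eset n r) := fun n r =>
    (closedE (Fr r) (hFr_lb r) (r:ℝ) (1/((n:ℝ)+1))).preimage continuous_subtype_val
  have hdense : ∀ n r : ℕ, Dense ((Eset n r)ᶜ) := by
    intro n r
    rw [Metric.dense_iff]
    intro φ ε hε
    set sepc : ℝ := 1/((n:ℝ)+1) with hsepc
    have hsepc_pos : 0 < sepc := by positivity
    set Z : Set (K × K) := {p | sepc ≤ dist p.1 p.2} with hZ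
    have hZc : IsClosed Z := isClosed_le continuous_const (continuous_fst.dist continuous_snd)
    have hZd : ∀ p : K × K, p ∈ Z → p.1 ≠ p.2 := by
      intro p hp heq
      rw [hZ, Set.mem_setOf_eq, heq, dist_self] at hp
      linarith
    obtain ⟨N, ℓ, η, hη, hℓ⟩ := sep hZc hZd
    set e : K → EuclideanSpace ℝ (Fin N) :=
      fun x => (EuclideanSpace.equiv (Fin N) ℝ).symm (fun i => ℓ i x) with he
    have hecont : Continuous e := (EuclideanSpace.equiv (Fin N) ℝ).symm.continuous.comp
      (continuous_pi fun i => (ℓ i).continuous.comp continuous_subtype_val)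
    obtain ⟨B, hB⟩ : ∃ B : ℝ, ∀ x : K, ‖e x‖ ≤ B := by
      obtain ⟨B, hB⟩ := (isCompact_range hecont.norm).bddAbove
      exact ⟨B, fun x => hB (Set.mem_range_self x)⟩
    have hB0 : 0 ≤ B := le_trans (norm_nonneg _) (hB q₀)
    set h : K → ℝ := fun x => Fr r x - φ.1 x with hh
    have hhlb : ∀ x, (b - ‖φ.1‖) ≤ h x := by
      intro x
      have h1 := φ.1.norm_coe_le_norm x
      rw [Real.norm_eq_abs, abs_le] at h1
      have h2 := hFr_lb r x
      simp only [hh]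
      linarith [h1.2]
    have hεB : 0 < ε / (2*(B+1)) := by positivity
    obtain ⟨c, hcnorm, δ, hδpos, hkey⟩ := core h hhlb e hB hεB hη
    set a : C(K, ℝ) := ⟨fun x => ⟪c, e x⟫, continuous_const.inner hecont⟩ with ha
    have haval : ∀ x : K, a x = ⟪c, e x⟫ := fun x => rfl
    have hanorm : ‖a‖ ≤ ‖c‖ * B := by
      refine (ContinuousMap.norm_le _ (by positivity)).mpr ?_
      intro x
      rw [haval, Real.norm_eq_abs]
      calc |⟪c, e x⟫| ≤ ‖c‖ * ‖e x‖ := abs_real_inner_le_norm _ _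
        _ ≤ ‖c‖ * B := mul_le_mul_of_nonneg_left (hB x) (norm_nonneg _)
    have hanorm2 : ‖a‖ < ε := by
      have h1 : ‖c‖ * B ≤ (ε / (2*(B+1))) * (B+1) :=
        mul_le_mul hcnorm.le (by linarith) hB0 hεB.le
      have h2 : (ε / (2*(B+1))) * (B+1) = ε/2 := by
        field_simp
      linarith [hanorm]
    have haff : ∀ (xa xb : X) (hxa : xa ∈ K) (hxb : xb ∈ K) (l : ℝ), 0 ≤ l → l ≤ 1 →
        ∀ hm : l • xa + (1 - l) • xb ∈ K,
        (φ.1 + a) ⟨l • xa + (1 - l) • xb, hm⟩ =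
          l * (φ.1 + a) ⟨xa, hxa⟩ + (1 - l) * (φ.1 + a) ⟨xb, hxb⟩ := by
      intro xa xb hxa hxb l hl0 hl1 hm
      have hφa := φ.2 xa xb hxa hxb l hl0 hl1 hm
      have hea : e ⟨l • xa + (1 - l) • xb, hm⟩ = l • e ⟨xa, hxa⟩ + (1 - l) • e ⟨xb, hxb⟩ := by
        have h1 : (fun i => ℓ i (((⟨l • xa + (1 - l) • xb, hm⟩ : K) : X))) =
            l • (fun i => ℓ i ((⟨xa, hxa⟩ : K) : X)) + (1 - l) •
              (fun i => ℓ i ((⟨xb, hxb⟩ : K) : X)) := by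
          funext i
          simp only [Pi.add_apply, Pi.smul_apply, smul_eq_mul]
          rw [map_add, _root_.map_smul, _root_.map_smul]
          simp [smul_eq_mul]
        rw [he]
        simp only []
        rw [h1, map_add, _root_.map_smul, _root_.map_smul]
      have haa : a ⟨l • xa + (1 - l) • xb, hm⟩ = l * a ⟨xa, hxa⟩ + (1-l) * a ⟨xb, hxb⟩ := by
        rw [haval, haval, haval, hea, inner_add_right, real_inner_smul_right,
          real_inner_smul_right]
      simp only [ContinuousMap.add_apply]
      rw [hφa, haa]
      ring
    set ψ : A := ⟨φ.1 + a, haff⟩ with hψdef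
    refine ⟨ψ, Set.mem_inter ?_ ?_⟩
    · rw [mem_ball, Subtype.dist_eq, hψdef]
      simp only []
      rw [dist_eq_norm, add_sub_cancel_left]
      exact hanorm2
    · intro hmem
      simp only [hEset, Set.mem_preimage, hCset, Set.mem_setOf_eq, hψdef] at hmem
      obtain ⟨-, hP⟩ := hmem
      obtain ⟨x, y, hsepxy, hx, hy⟩ := hP δ hδpos
      have hrw : ∀ z : K, Fr r z - (φ.1 + a) z = h z - ⟪c, e z⟫ := by
        intro z
        simp only [ContinuousMap.add_apply, hh, haval]
        ring
      have hinf : (⨅ z : K, (Fr r z - (φ.1 + a) z)) = ⨅ z : K, (h z - ⟪c, e z⟫) :=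
        iInf_congr hrw
      rw [hrw x, hinf] at hx
      rw [hrw y, hinf] at hy
      have hxy := hkey x y hx hy
      have hηlt : η < ‖e x - e y‖ := by simpa [he] using hℓ (x, y) hsepxy
      linarith
  have hmeagre : ∀ n r : ℕ, IsMeagre (Eset n r) := by
    intro n r
    show (Eset n r)ᶜ ∈ residual _
    exact residual_of_dense_open (hEclosed n r).isOpen_compl (hdense n r)
  refine IsMeagre.mono ?_ (isMeagre_iUnion fun n => isMeagre_iUnion fun r => hmeagre n r)
  intro φ hφ
  simp only [Set.mem_setOf_eq] at hφ
  by_contra hnot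
  simp only [Set.mem_iUnion, not_exists] at hnot
  set r : ℕ := ⌈‖φ.1‖⌉₊ with hrdef
  have hφr : ‖φ.1‖ ≤ (r : ℝ) := Nat.le_ceil _
  have hφbound : ∀ x : K, |φ.1 x| ≤ (r:ℝ) := by
    intro x
    have := φ.1.norm_coe_le_norm x
    rw [Real.norm_eq_abs] at this
    linarith
  set g : K → ℝ := fun x => Fr r x - φ.1 x with hg
  have hδ : ∀ n : ℕ, ∃ δ : ℝ, 0 < δ ∧ ∀ x y : K, 1/((n:ℝ)+1) ≤ dist x y →
      ¬(g x < (⨅ z : K, g z) + δ ∧ g y < (⨅ z : K, g z) + δ) := by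
    intro n
    have h1 : φ ∉ Eset n r := hnot n r
    simp only [hEset, Set.mem_preimage, hCset, Set.mem_setOf_eq] at h1
    have h2 : ¬ ∀ δ : ℝ, 0 < δ → ∃ x y : K, 1/((n:ℝ)+1) ≤ dist x y ∧
        Fr r x - φ.1 x < (⨅ z : K, (Fr r z - φ.1 z)) + δ ∧
        Fr r y - φ.1 y < (⨅ z : K, (Fr r z - φ.1 z)) + δ := fun hP => h1 ⟨hφr, hP⟩
    push_neg at h2
    obtain ⟨δ₀, hδ₀pos, hδ₀⟩ := h2
    refine ⟨δ₀, hδ₀pos, ?_⟩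
    intro x y hsepxy hcon
    exact absurd hcon.2 (not_lt.mpr (hδ₀ x y hsepxy hcon.1))
  have hglsc : LowerSemicontinuous g := by
    have h2 : Continuous (fun x : K => -(φ.1 x)) := (map_continuous φ.1).neg
    have h3 := (hFr_lsc r).add h2.lowerSemicontinuous
    simpa [sub_eq_add_neg, hg] using h3
  have hgbdd : BddBelow (Set.range g) := bddBelowAux (Fr r) (hFr_lb r) φ.1
  obtain ⟨x₀, hx₀m, hstrict⟩ := strictMin g hglsc hgbdd hδ
  have hm_le : (⨅ z : K, g z) ≤ c₀ + r := by
    have h1 : (⨅ z : K, g z) ≤ g q₀ := ciInf_le hgbdd q₀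
    have h2 := hφbound q₀
    rw [abs_le] at h2
    have h3 : g q₀ = c₀ - φ.1 q₀ := by rw [hg]; simp only [hFrq₀ r]
    rw [h3] at h1
    linarith [h2.1]
  have hFrx₀_lt : Fr r x₀ < C r := by
    have h1 : Fr r x₀ = (⨅ z : K, g z) + φ.1 x₀ := by
      rw [← hx₀m, hg]
      ring
    have h2 := hφbound x₀
    rw [abs_le] at h2
    have h3 : (0:ℝ) ≤ (r:ℝ) := Nat.cast_nonneg r
    rw [hCdef]
    simp only []
    linarith [h2.2]
  have hfx₀ : f x₀ = ((Fr r x₀ : ℝ) : EReal) := by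
    rcases lt_or_ge (f x₀) (((C r : ℝ)) : EReal) with hlt | hge
    · have h1 : f x₀ ⊓ ((C r : ℝ) : EReal) = f x₀ := inf_eq_left.mpr hlt.le
      rw [hFrdef]
      simp only [h1]
      rw [EReal.coe_toReal (hlt.trans (EReal.coe_lt_top _)).ne (hreal x₀)]
    · exfalso
      have h1 : f x₀ ⊓ ((C r : ℝ) : EReal) = ((C r : ℝ) : EReal) := inf_eq_right.mpr hge
      have h2 : Fr r x₀ = C r := by
        rw [hFrdef]
        simp only [h1, EReal.toReal_coe]
      linarith [hFrx₀_lt]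
  refine hφ ⟨x₀, ?_⟩
  intro p hp
  have h1 : g x₀ < g p := hstrict p hp
  have h2 : ((Fr r p - φ.1 p : ℝ) : EReal) ≤ f p - ((φ.1 p : ℝ) : EReal) := by
    rw [EReal.coe_sub]
    exact EReal.sub_le_sub (hFr_le_f r p) le_rfl
  have h3 : f x₀ - ((φ.1 x₀ : ℝ) : EReal) = ((Fr r x₀ - φ.1 x₀ : ℝ) : EReal) := by
    rw [EReal.coe_sub, hfx₀]
  rw [h3]
  exact lt_of_lt_of_le (EReal.coe_lt_coe_iff.mpr h1) h2
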